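/- Let r > 0 and let a, b, c be points of the Euclidean plane with a ≠ c and b ≠ c. Then the circle of radius r centered at c (the set of points at distance exactly r from c) is not contained in the union of the closed disk of radius r centered at a and the closed disk of radius r centered at b. -/

import Mathlib

open RealInnerProductSpace

/-- In the Euclidean plane, given two nonzero vectors `p` and `q`, there is a
unit vector making a nonpositive inner product with both. -/
lemma exists_unit_inner_nonpos (p q : EuclideanSpace ℝ (Fin 2))
    (hp : p ≠ 0) (hq : q ≠ 0) :
    ∃ u : EuclideanSpace ℝ (Fin 2), ‖u‖ = 1 ∧ ⟪u, p⟫ ≤ 0 ∧ ⟪u, q⟫ ≤ 0 := by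
  have hpn : (0:ℝ) < ‖p‖ := norm_pos_iff.mpr hp
  have hqn : (0:ℝ) < ‖q‖ := norm_pos_iff.mpr hq
  set v : EuclideanSpace ℝ (Fin 2) := ‖q‖ • p + ‖p‖ • q with hv
  by_cases hv0 : v = 0
  · -- q is a negative multiple of p; pick a vector orthogonal to p
    haveI : Fact (Module.finrank ℝ (EuclideanSpace ℝ (Fin 2)) = 1 + 1) :=
      ⟨by simp [finrank_euclideanSpace]⟩
    have hdim : Module.finrank ℝ ((ℝ ∙ p)ᗮ) = 1 :=
      Submodule.finrank_orthogonal_span_singleton hp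
    have : Nontrivial ((ℝ ∙ p)ᗮ : Submodule ℝ (EuclideanSpace ℝ (Fin 2))) :=
      Module.nontrivial_of_finrank_pos (R := ℝ) (by rw [hdim]; norm_num)
    obtain ⟨⟨w, hw⟩, hwne⟩ := exists_ne (0 : ((ℝ ∙ p)ᗮ : Submodule ℝ _))
    have hw0 : w ≠ 0 := by
      intro h; apply hwne; ext; simp [h]
    have hwp : ⟪w, p⟫ = 0 := by
      have := (Submodule.mem_orthogonal _ w).mp hw p (Submodule.mem_span_singleton_self p)
      rwa [real_inner_comm]
    have hwq : ⟪w, q⟫ = 0 := by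
      have h1 : ‖p‖ • q = -(‖q‖ • p) := by
        rw [eq_neg_iff_add_eq_zero, add_comm]; exact hv0
      have h2 : ⟪w, ‖p‖ • q⟫ = -(‖q‖ * ⟪w, p⟫) := by
        rw [h1, inner_neg_right, real_inner_smul_right]
      rw [real_inner_smul_right] at h2
      have := h2
      rw [hwp] at this
      have : ‖p‖ * ⟪w, q⟫ = 0 := by linarith [this]
      exact (mul_eq_zero.mp this).resolve_left hpn.ne'
    refine ⟨‖w‖⁻¹ • w, ?_, ?_, ?_⟩
    · simp [norm_smul, abs_of_pos (inv_pos.mpr (norm_pos_iff.mpr hw0)),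
        inv_mul_cancel₀ (norm_pos_iff.mpr hw0).ne']
    · rw [real_inner_smul_left, hwp]; simp
    · rw [real_inner_smul_left, hwq]; simp
  · refine ⟨-(‖v‖⁻¹ • v), ?_, ?_, ?_⟩
    · simp [norm_smul, abs_of_pos (inv_pos.mpr (norm_pos_iff.mpr hv0)),
        inv_mul_cancel₀ (norm_pos_iff.mpr hv0).ne']
    · rw [inner_neg_left, real_inner_smul_left, neg_nonpos]
      apply mul_nonneg (by positivity)
      rw [hv, inner_add_left, real_inner_smul_left, real_inner_smul_left,
        real_inner_self_eq_norm_sq]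
      have := abs_real_inner_le_norm q p
      nlinarith [abs_le.mp this]
    · rw [inner_neg_left, real_inner_smul_left, neg_nonpos]
      apply mul_nonneg (by positivity)
      rw [hv, inner_add_left, real_inner_smul_left, real_inner_smul_left,
        real_inner_self_eq_norm_sq]
      have := abs_real_inner_le_norm p q
      nlinarith [abs_le.mp this]

/-- The circle of radius `r > 0` centered at `c` is not contained in the union
of two closed disks of the same radius `r` whose centers `a` and `b` both
differ from `c`. -/
theorem sphere_not_subset_union_closedBall
    (r : ℝ) (hr : 0 < r)
    (a b c : EuclideanSpace ℝ (Fin 2)) (hac : a ≠ c) (hbc : b ≠ c) :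
    ¬ (Metric.sphere c r ⊆ Metric.closedBall a r ∪ Metric.closedBall b r) := by
  intro hsub
  obtain ⟨u, hu1, hua, hub⟩ := exists_unit_inner_nonpos (a - c) (b - c)
    (sub_ne_zero.mpr hac) (sub_ne_zero.mpr hbc)
  set x : EuclideanSpace ℝ (Fin 2) := c + r • u with hxdef
  have hx : x ∈ Metric.sphere c r := by
    simp [hxdef, dist_eq_norm, norm_smul, hu1, abs_of_pos hr]
  have key : ∀ p : EuclideanSpace ℝ (Fin 2), p ≠ c → ⟪u, p - c⟫ ≤ 0 →
      x ∉ Metric.closedBall p r := by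
    intro p hp hip
    rw [Metric.mem_closedBall, not_le, dist_eq_norm]
    have hxp : x - p = (c - p) + r • u := by rw [hxdef]; abel
    have hexp : ‖x - p‖ ^ 2 = ‖c - p‖ ^ 2 + 2 * ⟪c - p, r • u⟫ + ‖r • u‖ ^ 2 := by
      rw [hxp]; exact norm_add_sq_real _ _
    have h1 : ⟪c - p, r • u⟫ = -(r * ⟪u, p - c⟫) := by
      rw [real_inner_smul_right, real_inner_comm]
      have : (c - p : EuclideanSpace ℝ (Fin 2)) = -(p - c) := by abel
      rw [this, inner_neg_right]; ring
    have h2 : ‖r • u‖ ^ 2 = r ^ 2 := by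
      rw [norm_smul, hu1]; simp [abs_of_pos hr]
    have hcp : (0:ℝ) < ‖c - p‖ := by
      rw [norm_pos_iff, sub_ne_zero]; exact fun h => hp h.symm
    have : r ^ 2 < ‖x - p‖ ^ 2 := by
      rw [hexp, h1, h2]; nlinarith
    nlinarith [norm_nonneg (x - p)]
  rcases hsub hx with h | h
  · exact key a hac hua h
  · exact key b hbc hub h
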